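/- Fix k ∈ ℕ, k ≥ 1, and let X : ℝ × ℝ → ℝ be the flow of the ODE ∂_t X(t,x) = (1/k)·sin(k·X(t,x)), X(0,x) = x. Then for every t ≥ 0, X(t,·) is differentiable in x and for all x ∈ ℝ: ∂_x X(t,x) = eᵗ / (cos²(kx/2) + e^{2t}·sin²(kx/2)). -/

import Mathlib

noncomputable section

open Real Set

private lemma denom_pos (E θ : ℝ) (hE : 0 < E) :
    0 < Real.cos θ ^ 2 + E * Real.sin θ ^ 2 := by
  rcases le_or_gt 1 E with h | h
  · nlinarith [sin_sq_add_cos_sq θ, sq_nonneg (Real.sin θ)]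
  · nlinarith [sin_sq_add_cos_sq θ, sq_nonneg (Real.sin θ),
      mul_nonneg (by linarith : (0:ℝ) ≤ 1 - E) (sq_nonneg (Real.cos θ))]

/-- The auxiliary function inside arctan. -/
private def gg (K t x : ℝ) : ℝ :=
  (Real.exp t - 1) * Real.sin (K * x / 2) * Real.cos (K * x / 2) /
    (Real.cos (K * x / 2) ^ 2 + Real.exp t * Real.sin (K * x / 2) ^ 2)

/-- Explicit flow. -/
private def FF (K t x : ℝ) : ℝ := x + (2 / K) * Real.arctan (gg K t x)

private lemma FF_zero (K x : ℝ) : FF K 0 x = x := by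
  simp [FF, gg]

/-- Spatial derivative of the explicit flow. -/
private lemma FF_spatial (K t x : ℝ) (hK : 0 < K) :
    HasDerivAt (fun y => FF K t y)
      (Real.exp t / (Real.cos (K * x / 2) ^ 2 + Real.exp (2 * t) * Real.sin (K * x / 2) ^ 2)) x := by
  set s := Real.sin (K * x / 2) with hs_def
  set c := Real.cos (K * x / 2) with hc_def
  have hE := Real.exp_pos t
  have hDpos : 0 < c ^ 2 + Real.exp t * s ^ 2 := denom_pos _ _ hE
  have hD2pos : 0 < c ^ 2 + Real.exp (2 * t) * s ^ 2 := denom_pos _ _ (Real.exp_pos _)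
  have h1 : HasDerivAt (fun y : ℝ => K * y / 2) (K / 2) x := by
    simpa using ((hasDerivAt_id x).const_mul K).div_const 2
  have hsin : HasDerivAt (fun y => Real.sin (K * y / 2)) (c * (K / 2)) x :=
    h1.sin
  have hcos : HasDerivAt (fun y => Real.cos (K * y / 2)) (-s * (K / 2)) x :=
    h1.cos
  have hN : HasDerivAt (fun y => (Real.exp t - 1) * Real.sin (K * y / 2) * Real.cos (K * y / 2))
      ((Real.exp t - 1) * (c * (K / 2)) * c + (Real.exp t - 1) * s * (-s * (K / 2))) x :=
    ((hsin.const_mul (Real.exp t - 1)).mul hcos)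
  have hD : HasDerivAt
      (fun y => Real.cos (K * y / 2) ^ 2 + Real.exp t * Real.sin (K * y / 2) ^ 2)
      (2 * c ^ 1 * (-s * (K / 2)) + Real.exp t * (2 * s ^ 1 * (c * (K / 2)))) x :=
    (hcos.pow 2).add ((hsin.pow 2).const_mul (Real.exp t))
  have hg : HasDerivAt (fun y => gg K t y)
      ((((Real.exp t - 1) * (c * (K / 2)) * c + (Real.exp t - 1) * s * (-s * (K / 2))) *
          (c ^ 2 + Real.exp t * s ^ 2) -
        (Real.exp t - 1) * s * c *
          (2 * c ^ 1 * (-s * (K / 2)) + Real.exp t * (2 * s ^ 1 * (c * (K / 2))))) /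
        (c ^ 2 + Real.exp t * s ^ 2) ^ 2) x := hN.div hD hDpos.ne'
  have hA : HasDerivAt (fun y => Real.arctan (gg K t y))
      ((1 / (1 + gg K t x ^ 2)) * _) x := hg.arctan
  have hF : HasDerivAt (fun y => FF K t y) _ x := (hasDerivAt_id x).add (hA.const_mul (2 / K))
  convert hF using 1
  have hsc : s ^ 2 + c ^ 2 = 1 := sin_sq_add_cos_sq _
  have hE2 : Real.exp (2*t) = Real.exp t * Real.exp t := by rw [two_mul, Real.exp_add]
  have hgx : gg K t x = (Real.exp t - 1) * s * c / (c ^ 2 + Real.exp t * s ^ 2) := rfl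
  rw [hgx]
  have h1g : 1 + ((Real.exp t - 1) * s * c / (c ^ 2 + Real.exp t * s ^ 2)) ^ 2
      = (c ^ 2 + Real.exp (2 * t) * s ^ 2) / (c ^ 2 + Real.exp t * s ^ 2) ^ 2 := by
    rw [hE2]
    field_simp
    linear_combination (c ^ 2 + rexp t * rexp t * s ^ 2) * hsc
  rw [h1g]
  rw [hE2]
  have hKne : K ≠ 0 := hK.ne'
  have hAne : c ^ 2 + rexp t * rexp t * s ^ 2 ≠ 0 := by rw [← hE2]; exact hD2pos.ne'
  have hBne : c ^ 2 + rexp t * s ^ 2 ≠ 0 := hDpos.ne'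
  field_simp
  clear_value s c
  grind


/-- Time derivative of the explicit flow. -/
private lemma FF_time (K t x : ℝ) (hK : 0 < K) :
    HasDerivAt (fun τ => FF K τ x) ((1 / K) * Real.sin (K * FF K t x)) t := by
  set s := Real.sin (K * x / 2) with hs_def
  set c := Real.cos (K * x / 2) with hc_def
  have hE := Real.exp_pos t
  have hDpos : 0 < c ^ 2 + Real.exp t * s ^ 2 := denom_pos _ _ hE
  have hKne : K ≠ 0 := hK.ne'
  have hBne : c ^ 2 + Real.exp t * s ^ 2 ≠ 0 := hDpos.ne'
  have hN : HasDerivAt (fun τ => (Real.exp τ - 1) * s * c) (Real.exp t * s * c) t :=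
    (((Real.hasDerivAt_exp t).sub_const 1).mul_const s).mul_const c
  have hD : HasDerivAt (fun τ => c ^ 2 + Real.exp τ * s ^ 2) (Real.exp t * s ^ 2) t :=
    ((Real.hasDerivAt_exp t).mul_const (s ^ 2)).const_add (c ^ 2)
  have hg : HasDerivAt (fun τ => gg K τ x)
      ((Real.exp t * s * c * (c ^ 2 + Real.exp t * s ^ 2) -
        (Real.exp t - 1) * s * c * (Real.exp t * s ^ 2)) /
        (c ^ 2 + Real.exp t * s ^ 2) ^ 2) t := hN.div hD hDpos.ne'
  have hA : HasDerivAt (fun τ => Real.arctan (gg K τ x))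
      ((1 / (1 + gg K t x ^ 2)) * _) t := hg.arctan
  have hF : HasDerivAt (fun τ => FF K τ x) _ t := ((hA.const_mul (2 / K)).const_add x)
  convert hF using 1
  have hsc : s ^ 2 + c ^ 2 = 1 := sin_sq_add_cos_sq _
  have hgx : gg K t x = (Real.exp t - 1) * s * c / (c ^ 2 + Real.exp t * s ^ 2) := rfl
  set G := gg K t x with hG_def
  have hsqpos : (0:ℝ) < 1 + G ^ 2 := by positivity
  have hsqrtne : Real.sqrt (1 + G ^ 2) ≠ 0 := by positivity
  have hsq : Real.sqrt (1 + G ^ 2) * Real.sqrt (1 + G ^ 2) = 1 + G ^ 2 :=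
    Real.mul_self_sqrt hsqpos.le
  have hsin2 : Real.sin (2 * Real.arctan G) = 2 * G / (1 + G ^ 2) := by
    rw [Real.sin_two_mul, Real.sin_arctan, Real.cos_arctan]
    field_simp
    rw [Real.sq_sqrt hsqpos.le]
  have hcos2 : Real.cos (2 * Real.arctan G) = (1 - G ^ 2) / (1 + G ^ 2) := by
    rw [Real.cos_two_mul, Real.cos_arctan]
    field_simp
    rw [Real.sq_sqrt hsqpos.le]
    ring
  have hKF : K * FF K t x = K * x + 2 * Real.arctan G := by
    rw [FF]; field_simp; ring
  rw [hKF, Real.sin_add, hsin2, hcos2]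
  have h2x : K * x = 2 * (K * x / 2) := by ring
  rw [h2x, Real.sin_two_mul, Real.cos_two_mul, ← hs_def, ← hc_def]
  rw [hgx]
  field_simp
  clear_value s c G
  clear hN hD hg hA hF hsin2 hcos2 hKF hsq hsqrtne hsqpos hG_def hgx h2x
  grind

/-- Fix `k ≥ 1` and let `X` be the flow of the ODE
`∂ₜ X(t,x) = (1/k)·sin(k·X(t,x))`, `X(0,x) = x`.  Then for every `t ≥ 0`, `X(t,·)` is
differentiable in `x` with `∂ₓ X(t,x) = eᵗ / (cos²(kx/2) + e^{2t}·sin²(kx/2))`. -/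
theorem flow_spatial_derivative (k : ℕ) (hk : 1 ≤ k) (X : ℝ → ℝ → ℝ)
    (hX0 : ∀ x : ℝ, X 0 x = x)
    (hODE : ∀ (x t : ℝ), HasDerivAt (fun s => X s x) ((1 / (k:ℝ)) * sin ((k:ℝ) * X t x)) t) :
    ∀ t : ℝ, 0 ≤ t → ∀ x : ℝ,
      HasDerivAt (fun y => X t y)
        (exp t / (cos ((k:ℝ) * x / 2) ^ 2 + exp (2 * t) * sin ((k:ℝ) * x / 2) ^ 2)) x := by
  intro t ht x
  have hK : (0:ℝ) < (k:ℝ) := by exact_mod_cast Nat.lt_of_lt_of_le Nat.zero_lt_one hk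
  have hKne : (k:ℝ) ≠ 0 := hK.ne'
  -- the vector field is 1-Lipschitz
  have hder : ∀ z : ℝ, HasDerivAt (fun w => (1 / (k:ℝ)) * Real.sin ((k:ℝ) * w))
      (Real.cos ((k:ℝ) * z)) z := by
    intro z
    have h1 : HasDerivAt (fun w : ℝ => (k:ℝ) * w) (k:ℝ) z := by
      simpa using (hasDerivAt_id z).const_mul (k:ℝ)
    have := ((Real.hasDerivAt_sin ((k:ℝ) * z)).comp z h1).const_mul (1 / (k:ℝ))
    exact this.congr_deriv (by field_simp)
  have hlip : LipschitzWith 1 (fun w => (1 / (k:ℝ)) * Real.sin ((k:ℝ) * w)) := by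
    apply lipschitzWith_of_nnnorm_deriv_le (fun z => (hder z).differentiableAt)
    intro z
    rw [(hder z).deriv]
    rw [← NNReal.coe_le_coe, coe_nnnorm, NNReal.coe_one, Real.norm_eq_abs]
    exact Real.abs_cos_le_one _
  -- uniqueness of the ODE solution
  have huniq : ∀ y : ℝ, X t y = FF (k:ℝ) t y := by
    intro y
    have := ODE_solution_unique_of_mem_Ioo
      (v := fun _ w => (1 / (k:ℝ)) * Real.sin ((k:ℝ) * w)) (s := fun _ => univ)
      (K := 1) (t₀ := 0) (a := -1) (b := t + 1)
      (fun _ _ => hlip.lipschitzOnWith)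
      (f := fun τ => X τ y) (g := fun τ => FF (k:ℝ) τ y)
      (by constructor <;> linarith)
      (fun τ _ => ⟨hODE y τ, mem_univ _⟩)
      (fun τ _ => ⟨by simpa using FF_time (k:ℝ) τ y hK, mem_univ _⟩)
      (by simpa [FF_zero] using hX0 y)
    exact this (by constructor <;> linarith)
  have heq : (fun y => X t y) = fun y => FF (k:ℝ) t y := funext huniq
  rw [heq]
  exact FF_spatial (k:ℝ) t x hK
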